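/- arXiv:1409.1141 — 2 statements merged into one kernel-verified Lean document; each statement's English description precedes it below -/
import Mathlib

section
/- Let R be a local ring and M a finitely generated R-module with m^2 M = 0 such that k is not a direct summand of M. Then Soc(M) = mM. -/
open CategoryTheory IsLocalRing TensorProduct

variable (R : Type) [CommRing R]

/-- Length of a module, as the Krull dimension of its submodule lattice. -/
noncomputable def len (M : Type) [AddCommGroup M] [Module R M] : ℕ :=
  (WithBot.unbotD 0 (Order.krullDim (Submodule R M))).toNat

/-- Minimal number of generators. -/
noncomputable def nu [IsLocalRing R] (M : Type) [AddCommGroup M] [Module R M] : ℕ :=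
  len R (M ⧸ (maximalIdeal R • (⊤ : Submodule R M)))

/-- The invariant `γ(M) = λ(M)/ν(M) - 1`. -/
noncomputable def gam [IsLocalRing R] (M : Type) [AddCommGroup M] [Module R M] : ℚ :=
  (len R M : ℚ) / (nu R M) - 1

/-- `Tor_i^R(M, N)`. -/
noncomputable def torM (i : ℕ) (M N : Type) [AddCommGroup M] [Module R M]
    [AddCommGroup N] [Module R N] : ModuleCat.{0} R :=
  ((Tor (ModuleCat.{0} R) i).obj (ModuleCat.of R M)).obj (ModuleCat.of R N)

/-- Betti numbers: `b_i(M) = dim_k Tor_i^R(k, M)`, computed as a length over `R`. -/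
noncomputable def betti [IsLocalRing R] (M : Type) [AddCommGroup M] [Module R M] (i : ℕ) : ℕ :=
  len R (torM R i (ResidueField R) M)

/-- `N` is (isomorphic to) the `j`-th syzygy of `M` in a minimal free resolution. -/
noncomputable def IsMinSyzygy [IsLocalRing R] : ℕ → ModuleCat.{0} R → ModuleCat.{0} R → Prop
  | 0, M, N => Nonempty (N ≃ₗ[R] M)
  | (j+1), M, N => ∃ P : ModuleCat.{0} R, IsMinSyzygy j M P ∧
      ∃ (n : ℕ) (f : (Fin n → R) →ₗ[R] P), Function.Surjective f ∧
        LinearMap.ker f ≤ maximalIdeal R • (⊤ : Submodule R (Fin n → R)) ∧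
        Nonempty (N ≃ₗ[R] LinearMap.ker f)

/-- The socle of a module: elements killed by the maximal ideal. -/
noncomputable def socle [IsLocalRing R] (M : Type) [AddCommGroup M] [Module R M] :
    Submodule R M :=
  ⨅ a ∈ maximalIdeal R, LinearMap.ker (LinearMap.lsmul R M a)

/-- `k` is a direct summand of `M`. -/
def ResidueFieldSummand [IsLocalRing R] (M : Type) [AddCommGroup M] [Module R M] : Prop :=
  ∃ (f : ResidueField R →ₗ[R] M) (g : M →ₗ[R] ResidueField R), g.comp f = LinearMap.id

/-- `N` has infinite projective dimension: no minimal syzygy of `N` is free. -/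
def InfiniteProjDim [IsLocalRing R] (N : Type) [AddCommGroup N] [Module R N] : Prop :=
  ¬ ∃ (n : ℕ) (S : ModuleCat.{0} R), IsMinSyzygy R n (ModuleCat.of R N) S ∧ Module.Free R S

/-- `ω` is a dualizing (canonical) module of the Artinian local ring `R`. -/
def IsDualizing [IsLocalRing R] (ω : Type) [AddCommGroup ω] [Module R ω] : Prop :=
  Module.Finite R ω ∧ Module.Injective R ω ∧ len R ↥(socle R ω) = 1

theorem stmt12 [IsLocalRing R] [IsNoetherianRing R]
    (M : Type) [AddCommGroup M] [Module R M] [Module.Finite R M]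
    (hm2M : maximalIdeal R ^ 2 • (⊤ : Submodule R M) = ⊥)
    (hsum : ¬ ResidueFieldSummand R M) :
    socle R M = maximalIdeal R • (⊤ : Submodule R M) := by
  set I := maximalIdeal R with hI
  apply le_antisymm
  · intro x hx
    by_contra hxm
    apply hsum
    have hxs : ∀ a ∈ I, a • x = 0 := by
      intro a ha
      simpa using (Submodule.mem_iInf _).mp ((Submodule.mem_iInf _).mp hx a) ha
    -- f : k →ₗ M
    have hker : I ≤ LinearMap.ker (LinearMap.toSpanSingleton R M x) := by
      intro a ha
      simpa [LinearMap.toSpanSingleton] using hxs a ha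
    let f : (R ⧸ I) →ₗ[R] M := Submodule.liftQ I (LinearMap.toSpanSingleton R M x) hker
    -- g
    letI : Field (R ⧸ I) := Ideal.Quotient.field I
    have hxN : (Submodule.Quotient.mk x : M ⧸ (I • (⊤ : Submodule R M))) ≠ 0 := by
      simpa [Submodule.Quotient.mk_eq_zero] using hxm
    obtain ⟨φ, hφ⟩ : ∃ φ : Module.Dual (R ⧸ I) (M ⧸ (I • (⊤ : Submodule R M))),
        φ (Submodule.Quotient.mk x) ≠ 0 := by
      by_contra h
      push_neg at h
      exact hxN ((Module.forall_dual_apply_eq_zero_iff (R ⧸ I) _).mp h)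
    set c := φ (Submodule.Quotient.mk x) with hc
    let ψ := c⁻¹ • φ
    have hψ : ψ (Submodule.Quotient.mk x) = 1 := by
      simp [ψ, inv_mul_cancel₀ hφ]
      exact inv_mul_cancel₀ hφ
    let g : M →ₗ[R] (R ⧸ I) :=
      (ψ.restrictScalars R).comp (Submodule.mkQ (I • (⊤ : Submodule R M)))
    refine ⟨f, g, ?_⟩
    apply LinearMap.ext
    intro y
    obtain ⟨r, rfl⟩ := Submodule.Quotient.mk_surjective I y
    show g (f (Submodule.Quotient.mk r)) = Submodule.Quotient.mk r
    have h1 : f (Submodule.Quotient.mk r) = r • x := rfl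
    rw [h1]
    show ψ (Submodule.Quotient.mk (r • x)) = Submodule.Quotient.mk r
    have h2 : (Submodule.Quotient.mk (r • x) : M ⧸ (I • (⊤ : Submodule R M)))
        = (Ideal.Quotient.mk I r) • (Submodule.Quotient.mk x) := rfl
    rw [h2, map_smul, hψ, smul_eq_mul, mul_one]
    rfl
  · intro x hx
    refine (Submodule.mem_iInf _).mpr fun a => (Submodule.mem_iInf _).mpr fun ha => ?_
    simp only [LinearMap.mem_ker, LinearMap.lsmul_apply]
    have : a • x ∈ I ^ 2 • (⊤ : Submodule R M) := by
      rw [pow_two, mul_smul]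
      exact Submodule.smul_mem_smul ha hx
    rw [hm2M] at this
    simpa using this
end

section
/- Let R be a commutative local ring and 0 → N →^φ R^2 →^ψ M → 0 a short exact sequence of finitely generated R-modules with M faithful. If Tor_2^R(M,M) = 0, then N is generated by at most one element. -/
open CategoryTheory IsLocalRing TensorProduct

variable (R : Type) [CommRing R]

open CategoryTheory.MonoidalCategory

set_option synthInstance.maxHeartbeats 400000
set_option maxHeartbeats 1000000

noncomputable section AuxProof19

lemma aux19_S1 (M N : Type) [AddCommGroup M] [Module R M] [AddCommGroup N] [Module R N]
    (φ : N →ₗ[R] (Fin 2 → R)) (ψ : (Fin 2 → R) →ₗ[R] M)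
    (hψ : Function.Surjective ψ)
    (hφ : Function.Injective φ)
    (hexact : LinearMap.ker ψ = LinearMap.range φ)
    (t r : ℕ) (g : (Fin t → R) →ₗ[R] N) (hg : Function.Surjective g)
    (p : (Fin r → R) →ₗ[R] ↥(LinearMap.ker g)) (hp : Function.Surjective p)
    (htor : Subsingleton (torM R 2 M M)) :
    Function.Injective (LinearMap.lTensor M (LinearMap.ker g).subtype) := by
  classical
  set V := ModuleCat.{0} R
  let X0 : V := ModuleCat.of R (Fin 2 → R)
  let X1 : V := ModuleCat.of R (Fin t → R)
  let X2 : V := ModuleCat.of R (Fin r → R)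
  let d0 : X1 ⟶ X0 := ModuleCat.ofHom (φ.comp g)
  let d1 : X2 ⟶ X1 := ModuleCat.ofHom ((LinearMap.ker g).subtype.comp p)
  have s : d1 ≫ d0 = 0 := by
    apply ModuleCat.hom_ext
    apply LinearMap.ext
    intro x
    show φ (g ((LinearMap.ker g).subtype (p x))) = 0
    rw [show g ((LinearMap.ker g).subtype (p x)) = 0 from LinearMap.mem_ker.mp (p x).2, map_zero]
  let C : ChainComplex V ℕ := ChainComplex.mk X0 X1 X2 d0 d1 s
    (fun S => ⟨Projective.syzygies S.f, Projective.d S.f, (Category.assoc (Projective.π _) (Limits.kernel.ι S.f) S.f).trans (by rw [Limits.kernel.condition]; exact Limits.comp_zero)⟩)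
  have hd10 : C.d 1 0 = d0 := ChainComplex.mk_d_1_0 _ _ _ _ _ _ _
  have hd21 : C.d 2 1 = d1 := ChainComplex.mk_d_2_1 _ _ _ _ _ _ _
  have hpi0' : d0 ≫ ModuleCat.ofHom ψ = 0 := by
    apply ModuleCat.hom_ext
    apply LinearMap.ext
    intro x
    show ψ (φ (g x)) = 0
    have : φ (g x) ∈ LinearMap.ker ψ := by
      rw [hexact]; exact ⟨g x, rfl⟩
    exact LinearMap.mem_ker.mp this
  have hpi0 : C.d 1 0 ≫ ModuleCat.ofHom ψ = 0 := by rw [hd10]; exact hpi0'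
  have hexactAt : ∀ n : ℕ, C.ExactAt (n + 1) := by
    intro n
    rw [HomologicalComplex.exactAt_iff' _ (n + 1 + 1) (n + 1) n (by simp) (by simp)]
    match n with
    | 0 =>
      rw [ShortComplex.moduleCat_exact_iff]
      rintro (x : Fin t → R) hx
      have hx' : (C.d 1 0) x = 0 := hx
      rw [hd10] at hx'
      have hker : x ∈ LinearMap.ker g := by
        refine LinearMap.mem_ker.mpr (hφ ?_)
        rw [map_zero]
        exact hx'
      obtain ⟨y, hy⟩ := hp ⟨x, hker⟩
      refine ⟨y, ?_⟩
      show (C.d 2 1) y = x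
      rw [hd21]
      show (LinearMap.ker g).subtype (p y) = x
      rw [hy]
      rfl
    | n + 1 =>
      dsimp [C, HomologicalComplex.sc', HomologicalComplex.shortComplexFunctor',
        ChainComplex.mk]
      simp only [ChainComplex.of.d, ↓reduceDIte, eqToHom_refl, Category.id_comp]
      exact CategoryTheory.exact_d_f _
  have hproj : ∀ n, CategoryTheory.Projective (C.X n) := by
    intro n
    obtain (_ | _ | _ | n) := n
    · exact ModuleCat.projective_of_free (Pi.basisFun R (Fin 2))
    · exact ModuleCat.projective_of_free (Pi.basisFun R (Fin t))
    · exact ModuleCat.projective_of_free (Pi.basisFun R (Fin r))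
    · apply Projective.projective_over
  let P : ProjectiveResolution (ModuleCat.of R M) :=
    { complex := C
      projective := hproj
      π := (ChainComplex.toSingle₀Equiv _ _).symm ⟨ModuleCat.ofHom ψ, hpi0⟩
      quasiIso := ⟨fun n => by
        cases n with
        | zero =>
          rw [ChainComplex.quasiIsoAt₀_iff, ShortComplex.quasiIso_iff_of_zeros']
          · refine (ShortComplex.exact_and_epi_g_iff_of_iso
              (ShortComplex.isoMk (Iso.refl _) (Iso.refl _) (Iso.refl _)
                (by simp [hd10]) (by simp [ChainComplex.toSingle₀Equiv_symm_apply_f_zero]) :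
                _ ≅ ShortComplex.mk d0 (ModuleCat.ofHom ψ) hpi0')).2 ⟨?_, ?_⟩
            · rw [ShortComplex.moduleCat_exact_iff_range_eq_ker]
              show LinearMap.range (φ.comp g) = LinearMap.ker ψ
              rw [LinearMap.range_comp, LinearMap.range_eq_top.2 hg, Submodule.map_top, ← hexact]
            · exact (ModuleCat.epi_iff_surjective _).2 hψ
          all_goals rfl
        | succ n =>
          rw [quasiIsoAt_iff_exactAt']
          · apply hexactAt
          · apply ChainComplex.exactAt_succ_single_obj⟩ }
  let F := (tensoringLeft V).obj (ModuleCat.of R M)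
  let T := (F.mapHomologicalComplex (ComplexShape.down ℕ)).obj C
  have hzero : Limits.IsZero ((F.leftDerived 2).obj (ModuleCat.of R M)) := by
    have : Subsingleton ((F.leftDerived 2).obj (ModuleCat.of R M)) := htor
    exact ModuleCat.isZero_of_subsingleton _
  have hzero2 : Limits.IsZero (T.homology 2) :=
    hzero.of_iso (P.isoLeftDerivedObj F 2).symm
  have hex : T.ExactAt 2 := (HomologicalComplex.exactAt_iff_isZero_homology _ _).mpr hzero2
  rw [T.exactAt_iff' 3 2 1 (by simp) (by simp), ShortComplex.moduleCat_exact_iff] at hex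
  suffices h0 : ∀ z : M ⊗[R] ↥(LinearMap.ker g),
      LinearMap.lTensor M (LinearMap.ker g).subtype z = 0 → z = 0 by
    intro z1 z2 h12
    have := h0 (z1 - z2) (by rw [map_sub, h12, sub_self])
    exact sub_eq_zero.mp this
  intro z hz
  obtain ⟨z', hz'⟩ := LinearMap.lTensor_surjective M hp z
  have hTd21 : (T.d 2 1 : T.X 2 ⟶ T.X 1) = ModuleCat.ofHom (LinearMap.lTensor M ((LinearMap.ker g).subtype ∘ₗ p)) := by
    show F.map (C.d 2 1) = _
    rw [hd21]
    rfl
  have h21 : T.d 2 1 z' = 0 := by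
    rw [hTd21]
    show LinearMap.lTensor M ((LinearMap.ker g).subtype ∘ₗ p) z' = 0
    rw [LinearMap.lTensor_comp, LinearMap.comp_apply, hz']
    exact hz
  obtain ⟨w, hw⟩ := hex z' h21
  have hw' : T.d 3 2 w = z' := hw
  have hdd : C.d 3 2 ≫ C.d 2 1 = 0 := C.d_comp_d 3 2 1
  rw [hd21] at hdd
  have hpD : p ∘ₗ ((C.d 3 2).hom : C.X 3 →ₗ[R] (Fin r → R)) = 0 := by
    apply LinearMap.ext
    intro v
    have h0 : d1 ((C.d 3 2) v) = 0 := by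
      have := LinearMap.congr_fun (congrArg ModuleCat.Hom.hom hdd) v
      exact this
    have h0' : ((LinearMap.ker g).subtype) (p ((C.d 3 2) v)) = 0 := h0
    exact Submodule.coe_eq_zero.mp h0'
  have hz0 : z = LinearMap.lTensor M p (LinearMap.lTensor M ((C.d 3 2).hom : C.X 3 →ₗ[R] (Fin r → R)) w) := by
    rw [← hz']
    congr 1
    exact hw'.symm
  rw [hz0]
  have hcomp : LinearMap.lTensor M p ∘ₗ LinearMap.lTensor M ((C.d 3 2).hom : C.X 3 →ₗ[R] (Fin r → R)) = 0 := by
    erw [← LinearMap.lTensor_comp, hpD, LinearMap.lTensor_zero]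
  exact LinearMap.congr_fun hcomp w

lemma aux19_shrink {N : Type} [AddCommGroup N] [Module R N] (t : ℕ)
    (g : (Fin t → R) →ₗ[R] N) (hg : Function.Surjective g)
    (w : Fin t → R) (hw : w ∈ LinearMap.ker g) (l : Fin t) (hu : IsUnit (w l)) :
    ∃ (g' : (Fin (t - 1) → R) →ₗ[R] N), Function.Surjective g' := by
  classical
  obtain ⟨t', rfl⟩ : ∃ t', t = t' + 1 := ⟨t - 1, (Nat.succ_pred_eq_of_pos l.pos).symm⟩
  rw [Nat.add_sub_cancel]
  let e := finSuccEquiv' l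
  let ext : (Fin t' → R) →ₗ[R] (Fin (t' + 1) → R) :=
    { toFun := fun u i => (e i).elim 0 u
      map_add' := by intro u v; funext i; cases h : e i <;> simp [h]
      map_smul' := by intro c u; funext i; cases h : e i <;> simp [h] }
  refine ⟨g ∘ₗ ext, ?_⟩
  intro n
  obtain ⟨v, hv⟩ := hg n
  set v' : Fin (t' + 1) → R := v - (↑hu.unit⁻¹ * v l) • w with hv'
  have hvl : v' l = 0 := by
    show v l - (↑hu.unit⁻¹ * v l) * w l = 0
    have h1 : (↑hu.unit⁻¹ : R) * w l = 1 := hu.val_inv_mul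
    calc v l - (↑hu.unit⁻¹ * v l) * w l = v l - (↑hu.unit⁻¹ * w l) * v l := by ring
      _ = 0 := by rw [h1]; ring
  refine ⟨fun j => v' (e.symm (some j)), ?_⟩
  have hext : ext (fun j => v' (e.symm (some j))) = v' := by
    funext i
    show (e i).elim 0 (fun j => v' (e.symm (some j))) = v' i
    cases h : e i with
    | none =>
      have hil : i = l := by
        have : e i = e l := by rw [h, finSuccEquiv'_at]
        exact e.injective this
      rw [hil, hvl]; rfl
    | some j =>
      have : e.symm (some j) = i := by rw [← h, Equiv.symm_apply_apply]
      simp [this]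
  show g (ext _) = n
  rw [hext, hv', map_sub, map_smul, hv, LinearMap.mem_ker.mp hw, smul_zero, sub_zero]

-- minimal presentation
lemma aux19_minpres [IsLocalRing R] (N : Type) [AddCommGroup N] [Module R N]
    [Module.Finite R N] :
    ∃ (t : ℕ) (g : (Fin t → R) →ₗ[R] N), Function.Surjective g ∧
      ∀ w ∈ LinearMap.ker g, ∀ l, w l ∈ maximalIdeal R := by
  classical
  have hex : ∃ n : ℕ, ∃ g : (Fin n → R) →ₗ[R] N, Function.Surjective g :=
    Module.Finite.exists_fin' R N
  obtain ⟨g, hg⟩ := Nat.find_spec hex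
  refine ⟨Nat.find hex, g, hg, ?_⟩
  intro w hw l
  by_contra hmem
  have hu : IsUnit (w l) := by
    rwa [IsLocalRing.mem_maximalIdeal, mem_nonunits_iff, not_not] at hmem
  obtain ⟨g', hg'⟩ := aux19_shrink R _ g hg w hw l hu
  exact Nat.find_min hex (by have := l.pos; omega : Nat.find hex - 1 < Nat.find hex) ⟨g', hg'⟩

-- determinant vanishing
lemma aux19_det (M N : Type) [AddCommGroup M] [Module R M] [AddCommGroup N] [Module R N]
    (φ : N →ₗ[R] (Fin 2 → R)) (ψ : (Fin 2 → R) →ₗ[R] M)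
    (hψ : Function.Surjective ψ)
    (hexact : LinearMap.ker ψ = LinearMap.range φ)
    (hfaithful : FaithfulSMul R M) :
    ∀ (n n' : N) (u w : Fin 2), φ n u * φ n' w = φ n w * φ n' u := by
  have core : ∀ n n' : N, φ n 0 * φ n' 1 = φ n 1 * φ n' 0 := by
    intro n n'
    have hD : ∀ m : M, (φ n 0 * φ n' 1 - φ n 1 * φ n' 0) • m = (0 : R) • m := by
      intro m
      obtain ⟨v, rfl⟩ := hψ m
      rw [zero_smul, ← map_smul]
      have harg : (φ n 0 * φ n' 1 - φ n 1 * φ n' 0) • v =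
          φ ((v 0 * φ n' 1 - v 1 * φ n' 0) • n + (v 1 * φ n 0 - v 0 * φ n 1) • n') := by
        rw [map_add, map_smul, map_smul]
        funext u
        fin_cases u <;>
          · simp only [Pi.smul_apply, Pi.add_apply, smul_eq_mul, Fin.mk_zero, Fin.mk_one,
              Fin.isValue]
            ring
      rw [harg]
      have hker : φ ((v 0 * φ n' 1 - v 1 * φ n' 0) • n + (v 1 * φ n 0 - v 0 * φ n 1) • n')
          ∈ LinearMap.ker ψ := by
        rw [hexact]; exact ⟨_, rfl⟩
      exact LinearMap.mem_ker.mp hker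
    exact sub_eq_zero.mp (FaithfulSMul.eq_of_smul_eq_smul hD)
  intro n n' u w
  fin_cases u <;> fin_cases w
  · rfl
  · exact core n n'
  · exact (core n n').symm
  · rfl

lemma aux19_key [IsLocalRing R] (M N : Type) [AddCommGroup M] [Module R M]
    [AddCommGroup N] [Module R N]
    (φ : N →ₗ[R] (Fin 2 → R)) (ψ : (Fin 2 → R) →ₗ[R] M)
    (hφ : Function.Injective φ) (hψ : Function.Surjective ψ)
    (hexact : LinearMap.ker ψ = LinearMap.range φ)
    (hdet : ∀ (n n' : N) (u w : Fin 2), φ n u * φ n' w = φ n w * φ n' u)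
    (t : ℕ) (ht : 2 ≤ t) (g : (Fin t → R) →ₗ[R] N) (hg : Function.Surjective g)
    (hkm : ∀ w ∈ LinearMap.ker g, ∀ l, w l ∈ maximalIdeal R)
    (S1 : Function.Injective (LinearMap.lTensor M (LinearMap.ker g).subtype)) :
    ∀ s : ℕ, ∀ v ∈ LinearMap.ker ψ, ∀ u, v u ∈ maximalIdeal R ^ s := by
  classical
  set a : Fin t → Fin 2 → R := fun l => φ (g (Pi.single l 1)) with ha
  intro s
  induction s with
  | zero => intro v hv u; simp
  | succ s ih =>
    have hstep : ∀ (j : Fin t) (u : Fin 2), a j u ∈ maximalIdeal R ^ (s + 1) := by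
      intro j u
      obtain ⟨i, hij⟩ : ∃ i : Fin t, i ≠ j := by
        by_cases h : j = ⟨0, by omega⟩
        · exact ⟨⟨1, by omega⟩, by rw [h]; simp [Fin.ext_iff]⟩
        · exact ⟨⟨0, by omega⟩, fun hh => h hh.symm⟩
      have hmem : ∀ u' : Fin 2,
          (a j u') • (Pi.single i (1 : R) : Fin t → R)
            - (a i u') • (Pi.single j (1 : R) : Fin t → R) ∈ LinearMap.ker g := by
        intro u'
        rw [LinearMap.mem_ker]
        apply hφ
        rw [map_zero, map_sub, map_smul, map_smul, map_sub, map_smul, map_smul]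
        funext wc
        simp only [Pi.sub_apply, Pi.smul_apply, smul_eq_mul, Pi.zero_apply]
        have hd := hdet (g (Pi.single i 1)) (g (Pi.single j 1)) u' wc
        rw [show φ (g (Pi.single i 1)) = a i from rfl,
          show φ (g (Pi.single j 1)) = a j from rfl] at hd
        rw [hd]
        ring
      set k0 : ↥(LinearMap.ker g) := ⟨_, hmem 0⟩ with hk0
      set k1 : ↥(LinearMap.ker g) := ⟨_, hmem 1⟩ with hk1
      set ξ : M ⊗[R] ↥(LinearMap.ker g) :=
        ψ (Pi.single 0 1) ⊗ₜ[R] k0 + ψ (Pi.single 1 1) ⊗ₜ[R] k1 with hξdef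
      have hcomb : ∀ l : Fin t,
          a l 0 • ψ (Pi.single 0 1) + a l 1 • ψ (Pi.single 1 1) = 0 := by
        intro l
        rw [← map_smul, ← map_smul, ← map_add]
        show ψ ((a l 0) • (Pi.single (0 : Fin 2) (1 : R) : Fin 2 → R)
            + (a l 1) • (Pi.single (1 : Fin 2) (1 : R) : Fin 2 → R)) = 0
        have h1 : (a l 0) • (Pi.single (0 : Fin 2) (1 : R) : Fin 2 → R)
            + (a l 1) • (Pi.single (1 : Fin 2) (1 : R) : Fin 2 → R) = a l := by
          funext u; fin_cases u <;> simp
        rw [h1]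
        have h2 : a l ∈ LinearMap.ker ψ := by rw [hexact]; exact ⟨_, rfl⟩
        exact LinearMap.mem_ker.mp h2
      have regroup : ∀ (x0 x1 : M) (q1 q2 : Fin t → R) (c0 c1 e0 e1 : R),
          x0 ⊗ₜ[R] (c0 • q1 - e0 • q2) + x1 ⊗ₜ[R] (c1 • q1 - e1 • q2)
          = (c0 • x0 + c1 • x1) ⊗ₜ[R] q1 - (e0 • x0 + e1 • x1) ⊗ₜ[R] q2 := by
        intros x0 x1 q1 q2 c0 c1 e0 e1
        rw [TensorProduct.tmul_sub, TensorProduct.tmul_sub, TensorProduct.tmul_smul,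
          TensorProduct.tmul_smul, TensorProduct.tmul_smul, TensorProduct.tmul_smul,
          TensorProduct.add_tmul, TensorProduct.add_tmul,
          TensorProduct.smul_tmul', TensorProduct.smul_tmul',
          TensorProduct.smul_tmul', TensorProduct.smul_tmul']
        abel
      have hξ0 : LinearMap.lTensor M (LinearMap.ker g).subtype ξ = 0 := by
        rw [hξdef, map_add, LinearMap.lTensor_tmul, LinearMap.lTensor_tmul]
        show ψ (Pi.single 0 1) ⊗ₜ[R] ((a j 0) • (Pi.single i (1:R) : Fin t → R)
            - (a i 0) • (Pi.single j (1:R) : Fin t → R))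
          + ψ (Pi.single 1 1) ⊗ₜ[R] ((a j 1) • (Pi.single i (1:R) : Fin t → R)
            - (a i 1) • (Pi.single j (1:R) : Fin t → R)) = 0
        rw [regroup, hcomb j, hcomb i, TensorProduct.zero_tmul, TensorProduct.zero_tmul,
          sub_zero]
      have hξ : ξ = 0 := by
        apply S1
        rw [hξ0, map_zero]
      set ξ' : (Fin 2 → R) ⊗[R] ↥(LinearMap.ker g) :=
        (Pi.single 0 1 : Fin 2 → R) ⊗ₜ[R] k0 + (Pi.single 1 1 : Fin 2 → R) ⊗ₜ[R] k1 with hξ'def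
      have hξ'ψ : LinearMap.rTensor ↥(LinearMap.ker g) ψ ξ' = ξ := by
        rw [hξ'def, map_add, LinearMap.rTensor_tmul, LinearMap.rTensor_tmul, hξdef]
      have hexact2 : Function.Exact
          (LinearMap.rTensor ↥(LinearMap.ker g) (LinearMap.ker ψ).subtype)
          (LinearMap.rTensor ↥(LinearMap.ker g) ψ) :=
        rTensor_exact ↥(LinearMap.ker g) (LinearMap.exact_subtype_ker_map ψ) hψ
      obtain ⟨η, hη⟩ := (hexact2 ξ').mp (by rw [hξ'ψ, hξ])
      set E : Fin 2 → ((Fin 2 → R) ⊗[R] ↥(LinearMap.ker g)) →ₗ[R] ↥(LinearMap.ker g) :=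
        fun u' => (TensorProduct.lid R ↥(LinearMap.ker g)).toLinearMap ∘ₗ
          LinearMap.rTensor ↥(LinearMap.ker g) (LinearMap.proj u') with hE
      have hrange : ∀ (θ : ↥(LinearMap.ker ψ) ⊗[R] ↥(LinearMap.ker g)) (u' : Fin 2) (q : Fin t),
          ((E u' (LinearMap.rTensor ↥(LinearMap.ker g) (LinearMap.ker ψ).subtype θ) :
            ↥(LinearMap.ker g)) : Fin t → R) q ∈ maximalIdeal R ^ (s + 1) := by
        intro θ
        induction θ using TensorProduct.induction_on with
        | zero => intro u' q; simp
        | tmul w k =>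
          intro u' q
          have h3 : E u' (LinearMap.rTensor ↥(LinearMap.ker g) (LinearMap.ker ψ).subtype
              (w ⊗ₜ[R] k)) = ((w : Fin 2 → R) u') • k := by
            rw [LinearMap.rTensor_tmul, hE]
            simp [TensorProduct.lid_tmul]
          rw [h3]
          have h4 : ((((w : Fin 2 → R) u') • k : ↥(LinearMap.ker g)) : Fin t → R) q
              = (w : Fin 2 → R) u' * ((k : Fin t → R) q) := rfl
          rw [h4, pow_succ]
          exact Ideal.mul_mem_mul (ih w.1 w.2 u') (hkm k.1 k.2 q)
        | add x y hx hy =>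
          intro u' q
          rw [map_add, map_add]
          have : ∀ (A B : ↥(LinearMap.ker g)) (q : Fin t),
              ((A + B : ↥(LinearMap.ker g)) : Fin t → R) q = (A : Fin t → R) q + (B : Fin t → R) q := by
            intros; rfl
          rw [this]
          exact add_mem (hx u' q) (hy u' q)
      have hE0 : E 0 ξ' = k0 := by
        rw [hξ'def, hE]
        simp [TensorProduct.lid_tmul, Pi.single_apply]
      have hE1 : E 1 ξ' = k1 := by
        rw [hξ'def, hE]
        simp [TensorProduct.lid_tmul, Pi.single_apply]
      have hval : ∀ u'' : Fin 2, ((⟨_, hmem u''⟩ : ↥(LinearMap.ker g)) : Fin t → R) i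
          = a j u'' := by
        intro u''
        show (a j u'' • (Pi.single i (1:R) : Fin t → R)
          - a i u'' • (Pi.single j (1:R) : Fin t → R)) i = a j u''
        rw [Pi.sub_apply, Pi.smul_apply, Pi.smul_apply, Pi.single_eq_same,
          Pi.single_eq_of_ne hij, smul_eq_mul, smul_eq_mul, mul_one, mul_zero, sub_zero]
      have hmain := hrange η u i
      rw [hη] at hmain
      by_cases h0 : u = 0
      · subst h0
        rw [hE0, hk0, hval 0] at hmain
        exact hmain
      · have h1 : u = 1 := by omega
        subst h1
        rw [hE1, hk1, hval 1] at hmain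
        exact hmain
    intro v hv u
    rw [hexact] at hv
    obtain ⟨n, rfl⟩ := hv
    obtain ⟨q, rfl⟩ := hg n
    have hq : g q = ∑ l, q l • g (Pi.single l 1) := by
      conv_lhs => rw [← Finset.univ_sum_single q]
      rw [map_sum]
      apply Finset.sum_congr rfl
      intro l _
      rw [← map_smul]
      congr 1
      funext j
      rw [Pi.smul_apply, smul_eq_mul]
      by_cases h : j = l
      · subst h; rw [Pi.single_eq_same, Pi.single_eq_same, mul_one]
      · rw [Pi.single_eq_of_ne h, Pi.single_eq_of_ne h, mul_zero]
    rw [hq, map_sum]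
    rw [Finset.sum_apply]
    apply Submodule.sum_mem
    intro l _
    rw [map_smul, Pi.smul_apply, smul_eq_mul]
    exact Ideal.mul_mem_left _ _ (hstep l u)

end AuxProof19

theorem stmt19 [IsLocalRing R] [IsNoetherianRing R]
    (M N : Type) [AddCommGroup M] [Module R M] [AddCommGroup N] [Module R N]
    [Module.Finite R M] [Module.Finite R N]
    (φ : N →ₗ[R] (Fin 2 → R)) (ψ : (Fin 2 → R) →ₗ[R] M)
    (hφ : Function.Injective φ) (hψ : Function.Surjective ψ)
    (hexact : LinearMap.ker ψ = LinearMap.range φ)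
    (hfaithful : FaithfulSMul R M)
    (htor : Subsingleton (torM R 2 M M)) :
    ∃ x : N, Submodule.span R {x} = ⊤ := by
  classical
  obtain ⟨t, g, hg, hkm⟩ := aux19_minpres R N
  by_cases ht : 2 ≤ t
  · have hfin : Module.Finite R ↥(LinearMap.ker g) :=
      Module.Finite.iff_fg.mpr (IsNoetherian.noetherian _)
    obtain ⟨r, p, hp⟩ := Module.Finite.exists_fin' R ↥(LinearMap.ker g)
    have S1 := aux19_S1 R M N φ ψ hψ hφ hexact t r g hg p hp htor
    have hdet := aux19_det R M N φ ψ hψ hexact hfaithful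
    have key := aux19_key R M N φ ψ hφ hψ hexact hdet t ht g hg hkm S1
    have hker0 : ∀ n : N, n = 0 := by
      intro n
      apply hφ
      rw [map_zero]
      funext u
      have hmem : ∀ s2 : ℕ, φ n u ∈ maximalIdeal R ^ s2 := fun s2 =>
        key s2 (φ n) (by rw [hexact]; exact ⟨n, rfl⟩) u
      have hbot : (⨅ s2 : ℕ, maximalIdeal R ^ s2) = ⊥ :=
        Ideal.iInf_pow_eq_bot_of_isLocalRing _
          (Ideal.IsMaximal.ne_top (IsLocalRing.maximalIdeal.isMaximal R))
      have : φ n u ∈ (⊥ : Ideal R) := hbot ▸ (Submodule.mem_iInf _).mpr hmem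
      simpa using this
    refine ⟨0, ?_⟩
    rw [eq_top_iff]
    intro n _
    rw [hker0 n]
    exact Submodule.zero_mem _
  · interval_cases t
    · refine ⟨0, ?_⟩
      rw [eq_top_iff]
      intro n _
      obtain ⟨q, rfl⟩ := hg n
      rw [Subsingleton.elim q 0, map_zero]
      exact Submodule.zero_mem _
    · refine ⟨g (Pi.single 0 1), ?_⟩
      rw [eq_top_iff]
      intro n _
      obtain ⟨q, rfl⟩ := hg n
      have hq : q = q 0 • (Pi.single (0 : Fin 1) (1 : R) : Fin 1 → R) := by
        funext l
        rw [Subsingleton.elim l 0]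
        simp
      rw [hq, map_smul]
      exact Submodule.smul_mem _ _ (Submodule.mem_span_singleton_self _)
end
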